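/- Let k > 0, ν > −k, and c ∈ ℝ. Then the generalized k-Bessel function y(x) = W^k_{ν,c}(x) satisfies, for all x > 0, the second-order differential equation y''(x) + x^{−1} y'(x) + (1/k²)(ck − ν²/x²) y(x) = 0. -/

import Mathlib

open Real Filter Set

/-- The k-gamma function, `Γ_k(x) = k^(x/k - 1) * Γ(x/k)`. -/
noncomputable def kGamma (k x : ℝ) : ℝ := k ^ (x / k - 1) * Real.Gamma (x / k)

/-- The generalized k-Bessel function `W^k_{ν,c}(x)`. -/
noncomputable def kBesselW (k ν c x : ℝ) : ℝ :=
  ∑' r : ℕ, (-c) ^ r / (kGamma k (r * k + ν + k) * (r.factorial : ℝ)) *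
    (x / 2) ^ (2 * (r : ℝ) + ν / k)

private lemma kGamma_pos {k x : ℝ} (hk : 0 < k) (hx : 0 < x) : 0 < kGamma k x :=
  mul_pos (Real.rpow_pos_of_pos hk _) (Real.Gamma_pos_of_pos (div_pos hx hk))

private lemma kGamma_add {k x : ℝ} (hk : 0 < k) (hx : 0 < x) :
    kGamma k (x + k) = x * kGamma k x := by
  unfold kGamma
  rw [add_div, div_self hk.ne', Real.Gamma_add_one (by positivity),
    show x / k + 1 - 1 = (x / k - 1) + 1 by ring, Real.rpow_add_one hk.ne']
  field_simp

private noncomputable def aCoef (k ν c : ℝ) (r : ℕ) : ℝ :=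
  (-c) ^ r / (kGamma k (r * k + ν + k) * (r.factorial : ℝ))

private lemma arg_pos {k ν : ℝ} (hk : 0 < k) (hν : -k < ν) (r : ℕ) :
    0 < (r : ℝ) * k + ν + k := by
  have : (0:ℝ) ≤ (r : ℝ) * k := mul_nonneg (Nat.cast_nonneg r) hk.le
  linarith

private lemma aCoef_succ {k ν c : ℝ} (hk : 0 < k) (hν : -k < ν) (r : ℕ) :
    aCoef k ν c (r + 1) =
      aCoef k ν c r * (-c) / (((r:ℝ) + 1) * (((r:ℝ) + 1) * k + ν)) := by
  have h1 : ((r + 1 : ℕ) : ℝ) * k + ν + k = ((r:ℝ) * k + ν + k) + k := by push_cast; ring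
  have hG := kGamma_pos hk (arg_pos hk hν r)
  have hfac : (0:ℝ) < (r.factorial : ℝ) := by exact_mod_cast r.factorial_pos
  have harg := arg_pos hk hν r
  unfold aCoef
  rw [h1, kGamma_add hk harg, Nat.factorial_succ]
  have h2 : ((r:ℝ) + 1) * k + ν = (r:ℝ) * k + ν + k := by ring
  push_cast
  rw [h2]
  field_simp
  ring

private lemma abs_aCoef_succ {k ν c : ℝ} (hk : 0 < k) (hν : -k < ν) (r : ℕ) :
    |aCoef k ν c (r + 1)| =
      |aCoef k ν c r| * |c| / (((r:ℝ) + 1) * (((r:ℝ) + 1) * k + ν)) := by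
  have hD : (0:ℝ) < ((r:ℝ) + 1) * (((r:ℝ) + 1) * k + ν) := by
    have h1 : (0:ℝ) < (r:ℝ) + 1 := by positivity
    have h2 : (0:ℝ) < ((r:ℝ) + 1) * k + ν := by nlinarith [mul_nonneg (Nat.cast_nonneg r : (0:ℝ) ≤ r) hk.le]
    exact mul_pos h1 h2
  rw [aCoef_succ hk hν r, abs_div, abs_mul, abs_neg, abs_of_pos hD]

private lemma summable_master {k ν c M E : ℝ} (hk : 0 < k) (hν : -k < ν)
    (hM : 0 ≤ M) (hE : 2 ≤ E) :
    Summable (fun r : ℕ => |aCoef k ν c r| * (2 * r + E) ^ 2 * M ^ r) := by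
  apply summable_of_ratio_norm_eventually_le (r := 1/2) (by norm_num)
  obtain ⟨N, hN⟩ := exists_nat_ge (8 * |c| * M / k)
  filter_upwards [eventually_ge_atTop (N + 1)] with r hr
  have hr1 : (N:ℝ) + 1 ≤ (r:ℝ) := by exact_mod_cast hr
  have hr0 : (0:ℝ) ≤ (r:ℝ) := Nat.cast_nonneg r
  have hD : (0:ℝ) < ((r:ℝ) + 1) * (((r:ℝ) + 1) * k + ν) := by
    have h2 : (0:ℝ) < ((r:ℝ) + 1) * k + ν := by nlinarith
    have h1 : (0:ℝ) < (r:ℝ) + 1 := by linarith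
    exact mul_pos h1 h2
  have hDge : 8 * |c| * M ≤ ((r:ℝ) + 1) * (((r:ℝ) + 1) * k + ν) := by
    have hNk : 8 * |c| * M ≤ (N:ℝ) * k := by
      rw [div_le_iff₀ hk] at hN; linarith
    have h2 : (r:ℝ) * k ≤ ((r:ℝ) + 1) * (((r:ℝ) + 1) * k + ν) := by
      nlinarith [sq_nonneg (r:ℝ)]
    have h3 : (N:ℝ) * k ≤ (r:ℝ) * k :=
      mul_le_mul_of_nonneg_right (by linarith) hk.le
    linarith
  have hE2 : (2 * ((r:ℝ) + 1) + E) ^ 2 ≤ 4 * (2 * r + E) ^ 2 := by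
    nlinarith [Nat.cast_nonneg r (α := ℝ)]
  have ha1 := abs_aCoef_succ (c := c) hk hν r
  have hterm : ∀ s : ℕ, (0:ℝ) ≤ |aCoef k ν c s| * (2 * s + E) ^ 2 * M ^ s := by
    intro s
    exact mul_nonneg (mul_nonneg (abs_nonneg _) (sq_nonneg _)) (pow_nonneg hM _)
  rw [Real.norm_eq_abs, Real.norm_eq_abs, abs_of_nonneg (hterm (r+1)), abs_of_nonneg (hterm r)]
  push_cast
  rw [ha1, pow_succ M r]
  have hB : (0:ℝ) ≤ |aCoef k ν c r| * M ^ r := mul_nonneg (abs_nonneg _) (pow_nonneg hM _)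
  have key : |c| * ((2 * ((r:ℝ) + 1) + E) ^ 2) * M ≤
      (((r:ℝ) + 1) * (((r:ℝ) + 1) * k + ν)) * (1/2 * (2 * r + E) ^ 2) := by
    nlinarith [mul_le_mul_of_nonneg_left hE2 (mul_nonneg (abs_nonneg c) hM),
      mul_le_mul_of_nonneg_right hDge (sq_nonneg (2 * (r:ℝ) + E)), abs_nonneg c, sq_nonneg (2*(r:ℝ)+E)]
  rw [div_mul_eq_mul_div, div_mul_eq_mul_div, div_mul_eq_mul_div, div_le_iff₀ hD]
  nlinarith [mul_le_mul_of_nonneg_left key hB]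

private noncomputable def T0 (k ν c : ℝ) (r : ℕ) (y : ℝ) : ℝ :=
  aCoef k ν c r * (y / 2) ^ (2 * (r : ℝ) + ν / k)

private noncomputable def T1 (k ν c : ℝ) (r : ℕ) (y : ℝ) : ℝ :=
  aCoef k ν c r * (1 / 2 * (2 * (r : ℝ) + ν / k) * (y / 2) ^ (2 * (r : ℝ) + ν / k - 1))

private noncomputable def T2 (k ν c : ℝ) (r : ℕ) (y : ℝ) : ℝ :=
  aCoef k ν c r * (1 / 2 * (2 * (r : ℝ) + ν / k) *
    (1 / 2 * (2 * (r : ℝ) + ν / k - 1) * (y / 2) ^ (2 * (r : ℝ) + ν / k - 1 - 1)))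

private lemma hasDerivAt_T0 (k ν c : ℝ) (r : ℕ) {y : ℝ} (hy : 0 < y) :
    HasDerivAt (T0 k ν c r) (T1 k ν c r y) y := by
  have h := (((hasDerivAt_id y).div_const 2).rpow_const
      (p := 2 * (r : ℝ) + ν / k) (Or.inl (by positivity))).const_mul (aCoef k ν c r)
  delta T0 T1
  simpa only [id_eq] using h

private lemma hasDerivAt_T1 (k ν c : ℝ) (r : ℕ) {y : ℝ} (hy : 0 < y) :
    HasDerivAt (T1 k ν c r) (T2 k ν c r y) y := by
  have h := ((((hasDerivAt_id y).div_const 2).rpow_const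
      (p := 2 * (r : ℝ) + ν / k - 1) (Or.inl (by positivity))).const_mul
        (1 / 2 * (2 * (r : ℝ) + ν / k))).const_mul (aCoef k ν c r)
  delta T1 T2
  simpa only [id_eq] using h

private lemma rpow_bound {x : ℝ} (hx : 0 < x) (w : ℝ) {y : ℝ}
    (hy : y ∈ Set.Ioo (x / 2) (2 * x)) (r : ℕ) :
    (y / 2) ^ (2 * (r : ℝ) + w) ≤ (x ^ 2) ^ r * max ((x / 4) ^ w) (x ^ w) := by
  obtain ⟨hy1, hy2⟩ := hy
  have hb0 : 0 < y / 2 := by linarith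
  have hbl : x / 4 < y / 2 := by linarith
  have hbu : y / 2 < x := by linarith
  have h1 : (y / 2) ^ (2 * (r : ℝ) + w) = ((y / 2) ^ 2) ^ r * (y / 2) ^ w := by
    rw [Real.rpow_add hb0, show (2 * (r : ℝ)) = ((2 * r : ℕ) : ℝ) by push_cast; ring,
      Real.rpow_natCast, pow_mul]
  rw [h1]
  have h2 : ((y / 2) ^ 2) ^ r ≤ (x ^ 2) ^ r := pow_le_pow_left₀ (sq_nonneg _) (by nlinarith) r
  have h3 : (y / 2) ^ w ≤ max ((x / 4) ^ w) (x ^ w) := by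
    rcases le_or_gt 0 w with hw | hw
    · exact le_max_of_le_right (Real.rpow_le_rpow hb0.le hbu.le hw)
    · exact le_max_of_le_left (Real.rpow_le_rpow_of_nonpos (by linarith) hbl.le hw.le)
  exact mul_le_mul h2 h3 (Real.rpow_nonneg hb0.le w) (pow_nonneg (sq_nonneg x) r)

theorem kBessel_ode (k ν c : ℝ) (hk : 0 < k) (hν : -k < ν) (x : ℝ) (hx : 0 < x) :
    deriv (deriv (kBesselW k ν c)) x + x⁻¹ * deriv (kBesselW k ν c) x +
      (1 / k ^ 2) * (c * k - ν ^ 2 / x ^ 2) * kBesselW k ν c x = 0 := by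
  have hk' : k ≠ 0 := hk.ne'
  set s : Set ℝ := Set.Ioo (x / 2) (2 * x) with hs
  have hxs : x ∈ s := ⟨by linarith, by linarith⟩
  set E : ℝ := |ν / k| + 2 with hE
  have hE2 : (2 : ℝ) ≤ E := le_add_of_nonneg_left (abs_nonneg _)
  set M : ℝ := x ^ 2 with hM'
  have hM : (0 : ℝ) ≤ M := sq_nonneg x
  have hq : -(E - 2) ≤ ν / k ∧ ν / k ≤ E - 2 := abs_le.mp (le_of_eq (by rw [hE]; ring))
  have habs : ∀ r : ℕ, |2 * (r : ℝ) + ν / k| ≤ 2 * r + E := by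
    intro r
    have hr0 : (0 : ℝ) ≤ (r : ℝ) := Nat.cast_nonneg r
    rw [abs_le]; constructor <;> [linarith [hq.1]; linarith [hq.2]]
  have habs1 : ∀ r : ℕ, |2 * (r : ℝ) + ν / k - 1| ≤ 2 * r + E := by
    intro r
    have hr0 : (0 : ℝ) ≤ (r : ℝ) := Nat.cast_nonneg r
    rw [abs_le]; constructor <;> [linarith [hq.1]; linarith [hq.2]]
  have hone : ∀ r : ℕ, (1 : ℝ) ≤ 2 * r + E := by
    intro r
    have hr0 : (0 : ℝ) ≤ (r : ℝ) := Nat.cast_nonneg r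
    linarith
  have hmaster := summable_master (c := c) hk hν hM hE2
  have hsum1 : Summable (fun r : ℕ => |aCoef k ν c r| * (2 * r + E) * M ^ r) := by
    refine Summable.of_nonneg_of_le (fun r => ?_) (fun r => ?_) hmaster
    · exact mul_nonneg (mul_nonneg (abs_nonneg _) (by linarith [hone r])) (pow_nonneg hM _)
    · have h1 : (2 * (r : ℝ) + E) ≤ (2 * r + E) ^ 2 := by nlinarith [hone r]
      exact mul_le_mul_of_nonneg_right (mul_le_mul_of_nonneg_left h1 (abs_nonneg _))
        (pow_nonneg hM _)
  have hsum0 : Summable (fun r : ℕ => |aCoef k ν c r| * M ^ r) := by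
    refine Summable.of_nonneg_of_le (fun r => ?_) (fun r => ?_) hmaster
    · exact mul_nonneg (abs_nonneg _) (pow_nonneg hM _)
    · have h1 : (1 : ℝ) ≤ (2 * r + E) ^ 2 := by nlinarith [hone r]
      nlinarith [mul_nonneg (abs_nonneg (aCoef k ν c r)) (pow_nonneg hM r),
        mul_le_mul_of_nonneg_left h1 (mul_nonneg (abs_nonneg (aCoef k ν c r)) (pow_nonneg hM r))]
  set C0 : ℝ := max ((x / 4) ^ (ν / k)) (x ^ (ν / k)) with hC0'
  set C1 : ℝ := max ((x / 4) ^ (ν / k - 1)) (x ^ (ν / k - 1)) with hC1'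
  set C2 : ℝ := max ((x / 4) ^ (ν / k - 2)) (x ^ (ν / k - 2)) with hC2'
  -- pointwise bounds on s
  have hb0 : ∀ (r : ℕ), ∀ y ∈ s, ‖T0 k ν c r y‖ ≤ |aCoef k ν c r| * M ^ r * C0 := by
    intro r y hy
    have hy0 : (0 : ℝ) < y / 2 := by have := hy.1; simp only [hs, Set.mem_Ioo] at hy; linarith [hy.1]
    rw [Real.norm_eq_abs, T0, abs_mul, abs_of_nonneg (Real.rpow_nonneg hy0.le _)]
    calc |aCoef k ν c r| * (y / 2) ^ (2 * (r : ℝ) + ν / k)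
        ≤ |aCoef k ν c r| * ((x ^ 2) ^ r * C0) :=
          mul_le_mul_of_nonneg_left (rpow_bound hx _ hy r) (abs_nonneg _)
      _ = |aCoef k ν c r| * M ^ r * C0 := by rw [hM']; ring
  have hb1 : ∀ (r : ℕ), ∀ y ∈ s, ‖T1 k ν c r y‖ ≤ |aCoef k ν c r| * (2 * r + E) * M ^ r * C1 := by
    intro r y hy
    have hy0 : (0 : ℝ) < y / 2 := by simp only [hs, Set.mem_Ioo] at hy; linarith [hy.1]
    have e1 : (y / 2) ^ (2 * (r : ℝ) + (ν / k - 1)) ≤ (x ^ 2) ^ r * C1 := rpow_bound hx _ hy r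
    rw [show 2 * (r : ℝ) + (ν / k - 1) = 2 * (r : ℝ) + ν / k - 1 by ring] at e1
    rw [Real.norm_eq_abs, T1, abs_mul, abs_mul, abs_mul,
      abs_of_nonneg (Real.rpow_nonneg hy0.le _), abs_of_nonneg (by norm_num : (0:ℝ) ≤ 1/2)]
    have hC1pos : (0 : ℝ) ≤ (x ^ 2) ^ r * C1 :=
      le_trans (Real.rpow_nonneg hy0.le _) e1
    calc |aCoef k ν c r| * (1 / 2 * |2 * (r : ℝ) + ν / k| * (y / 2) ^ (2 * (r : ℝ) + ν / k - 1))
        ≤ |aCoef k ν c r| * ((2 * r + E) * ((x ^ 2) ^ r * C1)) := by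
          refine mul_le_mul_of_nonneg_left ?_ (abs_nonneg _)
          refine mul_le_mul ?_ e1 (Real.rpow_nonneg hy0.le _) (by linarith [hone r])
          calc 1 / 2 * |2 * (r : ℝ) + ν / k| ≤ |2 * (r : ℝ) + ν / k| := by
                have := abs_nonneg (2 * (r : ℝ) + ν / k); linarith
            _ ≤ 2 * r + E := habs r
      _ = |aCoef k ν c r| * (2 * r + E) * M ^ r * C1 := by rw [hM']; ring
  have hb2 : ∀ (r : ℕ), ∀ y ∈ s,
      ‖T2 k ν c r y‖ ≤ |aCoef k ν c r| * (2 * r + E) ^ 2 * M ^ r * C2 := by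
    intro r y hy
    have hy0 : (0 : ℝ) < y / 2 := by simp only [hs, Set.mem_Ioo] at hy; linarith [hy.1]
    have e1 : (y / 2) ^ (2 * (r : ℝ) + (ν / k - 2)) ≤ (x ^ 2) ^ r * C2 := rpow_bound hx _ hy r
    rw [show 2 * (r : ℝ) + (ν / k - 2) = 2 * (r : ℝ) + ν / k - 1 - 1 by ring] at e1
    rw [Real.norm_eq_abs, T2, abs_mul, abs_mul, abs_mul, abs_mul, abs_mul,
      abs_of_nonneg (Real.rpow_nonneg hy0.le _), abs_of_nonneg (by norm_num : (0:ℝ) ≤ 1/2)]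
    calc |aCoef k ν c r| * (1 / 2 * |2 * (r : ℝ) + ν / k| *
          (1 / 2 * |2 * (r : ℝ) + ν / k - 1| * (y / 2) ^ (2 * (r : ℝ) + ν / k - 1 - 1)))
        ≤ |aCoef k ν c r| * ((2 * r + E) * ((2 * r + E) * ((x ^ 2) ^ r * C2))) := by
          refine mul_le_mul_of_nonneg_left ?_ (abs_nonneg _)
          have hin : 1 / 2 * |2 * (r : ℝ) + ν / k - 1| * (y / 2) ^ (2 * (r : ℝ) + ν / k - 1 - 1)
              ≤ (2 * r + E) * ((x ^ 2) ^ r * C2) := by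
            refine mul_le_mul ?_ e1 (Real.rpow_nonneg hy0.le _) (by linarith [hone r])
            calc 1 / 2 * |2 * (r : ℝ) + ν / k - 1| ≤ |2 * (r : ℝ) + ν / k - 1| := by
                  have := abs_nonneg (2 * (r : ℝ) + ν / k - 1); linarith
              _ ≤ 2 * r + E := habs1 r
          refine mul_le_mul ?_ hin ?_ (by linarith [hone r])
          · calc 1 / 2 * |2 * (r : ℝ) + ν / k| ≤ |2 * (r : ℝ) + ν / k| := by
                  have := abs_nonneg (2 * (r : ℝ) + ν / k); linarith
              _ ≤ 2 * r + E := habs r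
          · have h1 : (0:ℝ) ≤ (y / 2) ^ (2 * (r : ℝ) + ν / k - 1 - 1) :=
              Real.rpow_nonneg hy0.le _
            have h2 : (0:ℝ) ≤ |2 * (r : ℝ) + ν / k - 1| := abs_nonneg _
            positivity
      _ = |aCoef k ν c r| * (2 * r + E) ^ 2 * M ^ r * C2 := by rw [hM']; ring
  -- summability at the point x
  have S0 : Summable (fun r : ℕ => T0 k ν c r x) :=
    Summable.of_norm_bounded ((hsum0.mul_right C0).congr (fun r => by ring))
      (fun r => hb0 r x hxs)
  have S1 : Summable (fun r : ℕ => T1 k ν c r x) :=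
    Summable.of_norm_bounded ((hsum1.mul_right C1).congr (fun r => by ring))
      (fun r => hb1 r x hxs)
  have S2 : Summable (fun r : ℕ => T2 k ν c r x) :=
    Summable.of_norm_bounded ((hmaster.mul_right C2).congr (fun r => by ring))
      (fun r => hb2 r x hxs)
  -- derivatives via term-by-term differentiation
  have hKB : kBesselW k ν c = fun y => ∑' r, T0 k ν c r y := rfl
  have hopen : IsOpen s := isOpen_Ioo
  have hpre : IsPreconnected s := isPreconnected_Ioo
  have Hd1 : ∀ y ∈ s, HasDerivAt (fun z => ∑' r, T0 k ν c r z) (∑' r, T1 k ν c r y) y := by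
    intro y hy
    refine hasDerivAt_tsum_of_isPreconnected
      ((hsum1.mul_right C1).congr (fun r => by ring)) hopen hpre
      (fun r z hz => hasDerivAt_T0 k ν c r ?_) (fun r z hz => hb1 r z hz) hxs S0 hy
    simp only [hs, Set.mem_Ioo] at hz; linarith [hz.1]
  have Hd2 : HasDerivAt (fun z => ∑' r, T1 k ν c r z) (∑' r, T2 k ν c r x) x := by
    refine hasDerivAt_tsum_of_isPreconnected
      ((hmaster.mul_right C2).congr (fun r => by ring)) hopen hpre
      (fun r z hz => hasDerivAt_T1 k ν c r ?_) (fun r z hz => hb2 r z hz) hxs S1 hxs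
    simp only [hs, Set.mem_Ioo] at hz; linarith [hz.1]
  have hDeq : ∀ y ∈ s, deriv (kBesselW k ν c) y = ∑' r, T1 k ν c r y := by
    intro y hy
    rw [hKB]
    exact (Hd1 y hy).deriv
  have e2 : deriv (kBesselW k ν c) x = ∑' r, T1 k ν c r x := hDeq x hxs
  have e1 : deriv (deriv (kBesselW k ν c)) x = ∑' r, T2 k ν c r x := by
    have hev : deriv (kBesselW k ν c) =ᶠ[nhds x] fun y => ∑' r, T1 k ν c r y := by
      filter_upwards [hopen.mem_nhds hxs] with y hy using hDeq y hy
    rw [hev.deriv_eq]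
    exact Hd2.deriv
  have e0 : kBesselW k ν c x = ∑' r, T0 k ν c r x := rfl
  rw [e1, e2, e0, ← tsum_mul_left, ← tsum_mul_left,
    ← Summable.tsum_add S2 (S1.mul_left x⁻¹),
    ← Summable.tsum_add (S2.add (S1.mul_left x⁻¹)) (S0.mul_left _)]
  -- pointwise algebraic identity and telescoping
  have hb : (0 : ℝ) < x / 2 := by linarith
  set tsh : ℕ → ℝ := fun r => if r = 0 then 0 else T0 k ν c (r - 1) x with htsh
  have comb : ∀ r : ℕ, T2 k ν c r x + x⁻¹ * T1 k ν c r x +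
      1 / k ^ 2 * (c * k - ν ^ 2 / x ^ 2) * T0 k ν c r x
      = c / k * T0 k ν c r x +
        aCoef k ν c r * ((r : ℝ) * ((r : ℝ) + ν / k)) * (x / 2) ^ (2 * ((r : ℝ) - 1) + ν / k) := by
    intro r
    have hP1 : (x / 2) ^ (2 * (r : ℝ) + ν / k - 1) = (x / 2) ^ (2 * (r : ℝ) + ν / k) / (x / 2) := by
      rw [Real.rpow_sub hb, Real.rpow_one]
    have hP2 : (x / 2) ^ (2 * (r : ℝ) + ν / k - 1 - 1)
        = (x / 2) ^ (2 * (r : ℝ) + ν / k) / (x / 2) / (x / 2) := by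
      rw [Real.rpow_sub hb, Real.rpow_one, hP1]
    have hP3 : (x / 2) ^ (2 * ((r : ℝ) - 1) + ν / k)
        = (x / 2) ^ (2 * (r : ℝ) + ν / k) / (x / 2) / (x / 2) := by
      rw [show 2 * ((r : ℝ) - 1) + ν / k = 2 * (r : ℝ) + ν / k - 1 - 1 by ring, hP2]
    simp only [T0, T1, T2]
    rw [hP1, hP2, hP3]
    field_simp
    ring
  have key : ∀ n : ℕ, aCoef k ν c (n + 1) * (((n + 1 : ℕ) : ℝ) * (((n + 1 : ℕ) : ℝ) + ν / k)) *
      (x / 2) ^ (2 * (((n + 1 : ℕ) : ℝ) - 1) + ν / k) = -(c / k) * T0 k ν c n x := by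
    intro n
    have hrec := aCoef_succ (c := c) hk hν n
    have hden : (0 : ℝ) < ((n : ℝ) + 1) * k + ν := by
      nlinarith [Nat.cast_nonneg (α := ℝ) n]
    simp only [T0]
    rw [hrec, show 2 * (((n + 1 : ℕ) : ℝ) - 1) + ν / k = 2 * (n : ℝ) + ν / k by push_cast; ring]
    push_cast
    field_simp
  have hteq : ∀ r : ℕ, T2 k ν c r x + x⁻¹ * T1 k ν c r x +
      1 / k ^ 2 * (c * k - ν ^ 2 / x ^ 2) * T0 k ν c r x
      = c / k * T0 k ν c r x - c / k * tsh r := by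
    intro r
    rw [comb r]
    cases r with
    | zero => simp [htsh]
    | succ n =>
      rw [key n]
      simp only [htsh, Nat.succ_ne_zero, if_false, Nat.add_sub_cancel]
      ring
  have Stsh : Summable tsh := by
    refine (summable_nat_add_iff 1).mp ?_
    have h1 : (fun n : ℕ => tsh (n + 1)) = fun n : ℕ => T0 k ν c n x := by
      funext n; simp [htsh]
    rw [h1]; exact S0
  have htshsum : ∑' r, tsh r = ∑' r, T0 k ν c r x := by
    rw [Summable.tsum_eq_zero_add Stsh]
    simp [htsh]
  calc ∑' r : ℕ, (T2 k ν c r x + x⁻¹ * T1 k ν c r x +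
        1 / k ^ 2 * (c * k - ν ^ 2 / x ^ 2) * T0 k ν c r x)
      = ∑' r : ℕ, (c / k * T0 k ν c r x - c / k * tsh r) := tsum_congr hteq
    _ = (∑' r : ℕ, c / k * T0 k ν c r x) - ∑' r : ℕ, c / k * tsh r :=
        Summable.tsum_sub (S0.mul_left _) (Stsh.mul_left _)
    _ = c / k * (∑' r : ℕ, T0 k ν c r x) - c / k * ∑' r : ℕ, tsh r := by
        rw [tsum_mul_left, tsum_mul_left]
    _ = 0 := by rw [htshsum]; ring
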